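/- Every vector y ∈ R^N decomposes as y = E_WZ y + E_ZW y + P_U y, where P_U = I - D(D^T D)^{-1} D^T is the orthogonal projector onto the orthogonal complement of the column space of D = [W Z]. -/

import Mathlib

open Matrix

theorem vector_decomposition_oblique {N P L : ℕ}
    (W : Matrix (Fin N) (Fin P) ℝ) (Z : Matrix (Fin N) (Fin L) ℝ)
    (hW : Wᵀ * W = 1) (hZ : Zᵀ * Z = 1)
    (hrank : (fromCols W Z).rank = P + L)
    (hD : IsUnit ((fromCols W Z)ᵀ * fromCols W Z))
    (hYW : IsUnit (Wᵀ * (1 - Z * Zᵀ) * W))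
    (hYZ : IsUnit (Zᵀ * (1 - W * Wᵀ) * Z))
    (y : Fin N → ℝ) :
    y = (W * (Wᵀ * (1 - Z * Zᵀ) * W)⁻¹ * Wᵀ * (1 - Z * Zᵀ)).mulVec y +
        (Z * (Zᵀ * (1 - W * Wᵀ) * Z)⁻¹ * Zᵀ * (1 - W * Wᵀ)).mulVec y +
        (1 - fromCols W Z * ((fromCols W Z)ᵀ * fromCols W Z)⁻¹ *
          (fromCols W Z)ᵀ).mulVec y := by
  set D := fromCols W Z with hDdef
  set A : Matrix (Fin P) (Fin L) ℝ := Wᵀ * Z with hA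
  set Q : Matrix (Fin P) (Fin P) ℝ := (Wᵀ * (1 - Z * Zᵀ) * W)⁻¹ with hQ
  set R : Matrix (Fin L) (Fin L) ℝ := (Zᵀ * (1 - W * Wᵀ) * Z)⁻¹ with hR
  have hAt : Zᵀ * W = Aᵀ := by rw [hA, transpose_mul, transpose_transpose]
  have hQe : Wᵀ * (1 - Z * Zᵀ) * W = 1 - A * Aᵀ := by
    rw [Matrix.mul_sub, Matrix.mul_one, Matrix.sub_mul, hW, hA, ← hAt]
    rw [Matrix.mul_assoc, Matrix.mul_assoc, Matrix.mul_assoc]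
  have hRe : Zᵀ * (1 - W * Wᵀ) * Z = 1 - Aᵀ * A := by
    rw [Matrix.mul_sub, Matrix.mul_one, Matrix.sub_mul, hZ, hA, ← hAt]
    rw [Matrix.mul_assoc, Matrix.mul_assoc, Matrix.mul_assoc]
  have hQinv : Q * (Wᵀ * (1 - Z * Zᵀ) * W) = 1 :=
    Matrix.nonsing_inv_mul _ ((Matrix.isUnit_iff_isUnit_det _).mp hYW)
  have hRinv : R * (Zᵀ * (1 - W * Wᵀ) * Z) = 1 :=
    Matrix.nonsing_inv_mul _ ((Matrix.isUnit_iff_isUnit_det _).mp hYZ)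
  have hQ1 : Q * (1 - A * Aᵀ) = 1 := by rw [← hQe]; exact hQinv
  have hR1 : R * (1 - Aᵀ * A) = 1 := by rw [← hRe]; exact hRinv
  -- D^T D as a block matrix
  have hDtD : Dᵀ * D = fromBlocks 1 A Aᵀ 1 := by
    rw [hDdef, transpose_fromCols, fromRows_mul_fromCols, hW, hZ, hAt, hA]
  set F : Matrix (Fin P ⊕ Fin L) (Fin P ⊕ Fin L) ℝ :=
    fromBlocks Q (-(Q * A)) (-(R * Aᵀ)) R with hF
  have hFinv : F * (Dᵀ * D) = 1 := by
    have h1 : Q - Q * (A * Aᵀ) = 1 := by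
      have h := hQ1; rwa [Matrix.mul_sub, Matrix.mul_one] at h
    have h2 : R - R * (Aᵀ * A) = 1 := by
      have h := hR1; rwa [Matrix.mul_sub, Matrix.mul_one] at h
    rw [hDtD, hF, fromBlocks_multiply, ← fromBlocks_one]
    rw [fromBlocks_inj]
    refine ⟨?_, ?_, ?_, ?_⟩
    · rw [Matrix.mul_one, Matrix.neg_mul, Matrix.mul_assoc, ← sub_eq_add_neg]; exact h1
    · rw [Matrix.mul_one, add_neg_cancel]
    · rw [Matrix.mul_one, neg_add_cancel]
    · rw [Matrix.mul_one, Matrix.neg_mul, Matrix.mul_assoc, add_comm, ← sub_eq_add_neg]; exact h2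
  have hInvEq : (Dᵀ * D)⁻¹ = F := Matrix.inv_eq_left_inv hFinv
  -- main matrix identity
  have hmain : W * Q * Wᵀ * (1 - Z * Zᵀ) + Z * R * Zᵀ * (1 - W * Wᵀ)
      + (1 - D * (Dᵀ * D)⁻¹ * Dᵀ) = 1 := by
    have hDF : D * F * Dᵀ =
        (W * Q + Z * -(R * Aᵀ)) * Wᵀ + (W * -(Q * A) + Z * R) * Zᵀ := by
      rw [hDdef, hF, fromCols_mul_fromBlocks, transpose_fromCols,
        fromCols_mul_fromRows]
    rw [hInvEq, hDF, hA]
    simp only [Matrix.mul_sub, Matrix.sub_mul, Matrix.add_mul, Matrix.mul_one,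
      Matrix.mul_neg, Matrix.neg_mul, Matrix.mul_assoc, transpose_mul,
      transpose_transpose]
    abel
  have hv := congrArg (fun M => M *ᵥ y) hmain
  simpa [Matrix.add_mulVec] using hv.symm
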